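/- Let H be a λ-intersecting k-uniform hypergraph, let e be an edge, and let A ⊆ V(H) be a set of vertices with |e ∩ A| < λ such that every vertex outside A has degree less than D. Then |E(H)| ≤ D·(k − |e ∩ A|)/(λ − |e ∩ A|). -/
import Mathlib


/-- In a λ-intersecting k-uniform hypergraph, if an edge e satisfies |e ∩ A| < λ and
every vertex outside A has degree less than D, then
|E(H)| ≤ D(k − |e ∩ A|)/(λ − |e ∩ A|). -/
theorem edge_bound_small_trace {V : Type*} [Fintype V] [DecidableEq V]
    (k lam D : ℕ) (hlam : 1 ≤ lam) (hlt : lam < k)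
    (H : Finset (Finset V))
    (hunif : ∀ e ∈ H, e.card = k)
    (hint : ∀ e ∈ H, ∀ f ∈ H, e ≠ f → (e ∩ f).card = lam)
    (e : Finset V) (he : e ∈ H) (A : Finset V)
    (ha : (e ∩ A).card < lam)
    (hD : ∀ v : V, v ∉ A → (H.filter (fun f => v ∈ f)).card < D) :
    (H.card : ℝ) ≤ (D : ℝ) * ((k : ℝ) - ((e ∩ A).card : ℝ)) /
      ((lam : ℝ) - ((e ∩ A).card : ℝ)) := by
  classical
  set a := (e ∩ A).card with ha'
  set S := e \ A with hS
  have hek : e.card = k := hunif e he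
  have hScard : S.card = k - a := by
    have h := Finset.card_sdiff_add_card_inter e A
    rw [← hS, ← ha'] at h
    omega
  -- double counting
  have hswap : ∑ f ∈ H, (f ∩ S).card = ∑ v ∈ S, (H.filter (fun f => v ∈ f)).card := by
    have h1 : ∀ f : Finset V, (f ∩ S).card = ∑ v ∈ S, if v ∈ f then 1 else 0 := by
      intro f
      rw [Finset.inter_comm, ← Finset.filter_mem_eq_inter, Finset.card_filter]
    have h2 : ∀ v : V, (H.filter (fun f => v ∈ f)).card
        = ∑ f ∈ H, if v ∈ f then 1 else 0 := fun v => Finset.card_filter _ _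
    simp only [h1, h2]
    exact Finset.sum_comm
  have hlower : H.card * (lam - a) ≤ ∑ f ∈ H, (f ∩ S).card := by
    have hstep : ∀ f ∈ H, lam - a ≤ (f ∩ S).card := by
      intro f hf
      by_cases hfe : f = e
      · subst hfe
        have heq : f ∩ S = S := by
          ext v; simp only [Finset.mem_inter, hS, Finset.mem_sdiff]; tauto
        rw [heq, hScard]; omega
      · have hfi : (f ∩ e).card = lam := by
          rw [Finset.inter_comm]; exact hint e he f hf (fun h => hfe h.symm)
        have hsub : f ∩ e ⊆ (f ∩ S) ∪ (e ∩ A) := by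
          intro v hv
          simp only [Finset.mem_inter, Finset.mem_union, Finset.mem_sdiff, hS] at *
          tauto
        have h3 := Finset.card_le_card hsub
        have h4 := Finset.card_union_le (f ∩ S) (e ∩ A)
        omega
    calc H.card * (lam - a) = ∑ _f ∈ H, (lam - a) := by
          rw [Finset.sum_const, smul_eq_mul]
      _ ≤ ∑ f ∈ H, (f ∩ S).card := Finset.sum_le_sum hstep
  have hupper : ∑ v ∈ S, (H.filter (fun f => v ∈ f)).card ≤ (k - a) * D := by
    calc ∑ v ∈ S, (H.filter (fun f => v ∈ f)).card ≤ ∑ _v ∈ S, D :=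
          Finset.sum_le_sum fun v hv => (hD v (Finset.mem_sdiff.mp hv).2).le
      _ = (k - a) * D := by rw [Finset.sum_const, hScard, smul_eq_mul]
  have hnat : H.card * (lam - a) ≤ D * (k - a) := by
    calc H.card * (lam - a) ≤ ∑ f ∈ H, (f ∩ S).card := hlower
      _ = _ := hswap
      _ ≤ (k - a) * D := hupper
      _ = D * (k - a) := mul_comm _ _
  have halam : a < lam := ha
  have hak : a < k := lt_trans halam hlt
  have hpos : (0 : ℝ) < (lam : ℝ) - a := by
    have : (a : ℝ) < lam := by exact_mod_cast halam
    linarith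
  rw [le_div_iff₀ hpos]
  have h1 : ((H.card * (lam - a) : ℕ) : ℝ) ≤ ((D * (k - a) : ℕ) : ℝ) := by
    exact_mod_cast hnat
  push_cast [Nat.cast_sub halam.le, Nat.cast_sub hak.le] at h1
  linarith
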